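/- Let p be an odd prime, n ≥ 1 a natural number, and set d = gcd(n, p−1). Suppose d > 1 and p > 2d + 1. Then for h = ⌈(d+1)/2⌉, every element of ℤ/pℤ is a sum of h n-th powers; that is, for every c ∈ ℤ/pℤ there exist x_1, …, x_h ∈ ℤ/pℤ with x_1^n + ⋯ + x_h^n = c. -/

import Mathlib

set_option linter.unusedSectionVars false

open Finset Pointwise

namespace CMS

variable {p : ℕ} [Fact p.Prime]

lemma cast_inj_lt {i j : ℕ} (hi : i < p) (hj : j < p) (h : (i : ZMod p) = j) : i = j := by
  have : ((i : ZMod p)).val = ((j : ZMod p)).val := by rw [h]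
  rwa [ZMod.val_cast_of_lt hi, ZMod.val_cast_of_lt hj] at this

/-- Arithmetic progression as a finset of `ZMod p`. -/
def apSet (b r : ZMod p) (N : ℕ) : Finset (ZMod p) :=
  (Finset.range N).image (fun i : ℕ => b + (i : ZMod p) * r)

lemma mem_apSet_iff {b r x : ZMod p} {N : ℕ} :
    x ∈ apSet b r N ↔ ∃ i, i < N ∧ x = b + (i : ZMod p) * r := by
  simp [apSet, eq_comm]

lemma apSet_card {b r : ZMod p} {N : ℕ} (hr : r ≠ 0) (hN : N ≤ p) :
    (apSet b r N).card = N := by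
  rw [apSet, Finset.card_image_of_injOn, Finset.card_range]
  intro i hi j hj hij
  simp only [Finset.mem_coe, Finset.mem_range] at hi hj
  have : (i : ZMod p) * r = (j : ZMod p) * r := by
    have := add_left_cancel hij
    exact this
  have hcast : (i : ZMod p) = j := mul_right_cancel₀ hr this
  exact cast_inj_lt (lt_of_lt_of_le hi hN) (lt_of_lt_of_le hj hN) hcast

lemma apSet_add_apSet {b c r : ZMod p} {M N : ℕ} (hM : 1 ≤ M) (hN : 1 ≤ N) :
    apSet b r M + apSet c r N = apSet (b + c) r (M + N - 1) := by
  ext x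
  simp only [Finset.mem_add, mem_apSet_iff]
  constructor
  · rintro ⟨y, hy, z, hz, rfl⟩
    obtain ⟨i, hi, rfl⟩ := hy
    obtain ⟨j, hj, rfl⟩ := hz
    refine ⟨i + j, by omega, by push_cast; ring⟩
  · rintro ⟨t, ht, rfl⟩
    refine ⟨b + (min t (M - 1) : ℕ) * r, ⟨min t (M-1), by omega, rfl⟩,
      c + ((t - min t (M - 1) : ℕ) : ZMod p) * r, ⟨t - min t (M-1), by omega, rfl⟩, ?_⟩
    have h1 : (min t (M-1)) + (t - min t (M-1)) = t := by omega
    have : ((min t (M-1) : ℕ) : ZMod p) + ((t - min t (M-1) : ℕ) : ZMod p) = (t : ZMod p) := by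
      rw [← Nat.cast_add, h1]
    calc b + (min t (M-1) : ℕ) * r + (c + ((t - min t (M-1) : ℕ) : ZMod p) * r)
        = b + c + (((min t (M-1) : ℕ) : ZMod p) + ((t - min t (M-1) : ℕ) : ZMod p)) * r := by ring
      _ = b + c + (t : ZMod p) * r := by rw [this]

lemma univ_of_all_sub {B : Finset (ZMod p)} {a r : ZMod p} (hr : r ≠ 0)
    (h : ∀ j : ℕ, a - (j : ZMod p) * r ∈ B) : B = Finset.univ := by
  apply Finset.eq_univ_of_forall
  intro x
  have hj := h (((a - x) * r⁻¹).val)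
  rwa [ZMod.natCast_val, ZMod.cast_id, inv_mul_cancel_right₀ hr, sub_sub_cancel] at hj

/-- The arc lemma: a set missing at most one "predecessor" is an arithmetic progression. -/
lemma arc {B : Finset (ZMod p)} {r : ZMod p} (hr : r ≠ 0) (hne : B.Nonempty)
    (hcard : B.card < p) (h1 : #(B.filter (fun x => x - r ∉ B)) ≤ 1) :
    ∃ b, B = apSet b r B.card := by
  interval_cases h : #(B.filter (fun x => x - r ∉ B))
  · -- no boundary: B closed under subtraction of r, so B = univ, contradiction
    exfalso
    rw [Finset.card_eq_zero, Finset.filter_eq_empty_iff] at h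
    obtain ⟨a, ha⟩ := hne
    have hall : ∀ j : ℕ, a - (j : ZMod p) * r ∈ B := by
      intro j
      induction j with
      | zero => simpa using ha
      | succ n ih =>
        have := h ih
        rw [not_not] at this
        have e : a - (n : ZMod p) * r - r = a - ((n+1 : ℕ) : ZMod p) * r := by push_cast; ring
        rwa [e] at this
    have := univ_of_all_sub hr hall
    rw [this, Finset.card_univ, ZMod.card] at hcard
    exact lt_irrefl _ hcard
  · obtain ⟨b₀, hb₀⟩ := Finset.card_eq_one.mp h
    have hb₀B : b₀ ∈ B ∧ b₀ - r ∉ B := by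
      have : b₀ ∈ B.filter (fun x => x - r ∉ B) := hb₀ ▸ Finset.mem_singleton_self b₀
      simpa using this
    have huniq : ∀ x ∈ B, x - r ∉ B → x = b₀ := by
      intro x hx hxr
      have : x ∈ B.filter (fun x => x - r ∉ B) := by simp [hx, hxr]
      rw [hb₀] at this; simpa using this
    have key : ∀ i, i < B.card → b₀ + (i : ZMod p) * r ∈ B := by
      intro i
      induction i using Nat.strong_induction_on with
      | _ i IH =>
        intro hi
        rcases Nat.eq_zero_or_pos i with rfl | hipos
        · simpa using hb₀B.1
        by_contra hnot
        -- the first i elements of the AP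
        set T : Finset (ZMod p) := (Finset.range i).image (fun j : ℕ => b₀ + (j : ZMod p) * r) with hT
        have hTB : T ⊆ B := by
          intro x hx
          simp only [hT, Finset.mem_image, Finset.mem_range] at hx
          obtain ⟨j, hj, rfl⟩ := hx
          exact IH j hj (lt_trans hj hi)
        have hTcard : T.card = i := by
          rw [hT, Finset.card_image_of_injOn, Finset.card_range]
          intro a ha b hb hab
          simp only [Finset.mem_coe, Finset.mem_range] at ha hb
          have h2 : (a : ZMod p) = b := mul_right_cancel₀ hr (add_left_cancel hab)
          have hip : i ≤ p := by omega
          exact cast_inj_lt (lt_of_lt_of_le ha hip) (lt_of_lt_of_le hb hip) h2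
        have hex : ∃ a, a ∈ B ∧ a ∉ T := by
          by_contra hno
          push_neg at hno
          have : B ⊆ T := fun x hx => hno x hx
          have := Finset.card_le_card this
          omega
        obtain ⟨a, haB, haT⟩ := hex
        have hfind : ∃ k, a - ((k+1 : ℕ) : ZMod p) * r ∉ B := by
          by_contra hno
          push_neg at hno
          have hall : ∀ j : ℕ, a - (j : ZMod p) * r ∈ B := by
            intro j
            cases j with
            | zero => simpa using haB
            | succ n => exact hno n
          have := univ_of_all_sub hr hall
          rw [this, Finset.card_univ, ZMod.card] at hcard
          exact lt_irrefl _ hcard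
        set k := Nat.find hfind with hkdef
        have hk : a - ((k+1 : ℕ) : ZMod p) * r ∉ B := Nat.find_spec hfind
        have hmin : ∀ j, j < k → a - ((j+1 : ℕ) : ZMod p) * r ∈ B := by
          intro j hj
          have := Nat.find_min hfind hj
          rwa [not_not] at this
        have hchain : ∀ j, j ≤ k → a - (j : ZMod p) * r ∈ B := by
          intro j hj
          cases j with
          | zero => simpa using haB
          | succ n => exact hmin n (by omega)
        have hak : a - (k : ZMod p) * r ∈ B := hchain k le_rfl
        have hakr : a - (k : ZMod p) * r - r ∉ B := by
          have e : a - (k : ZMod p) * r - r = a - ((k+1 : ℕ) : ZMod p) * r := by push_cast; ring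
          rwa [e]
        have hab : a - (k : ZMod p) * r = b₀ := huniq _ hak hakr
        have haeq : a = b₀ + (k : ZMod p) * r := by
          rw [← hab]; ring
        rcases lt_trichotomy k i with hki | hki | hki
        · exact haT (by
            simp only [hT, Finset.mem_image, Finset.mem_range]
            exact ⟨k, hki, haeq.symm⟩)
        · subst hki
          rw [haeq] at haB
          exact hnot haB
        · have hj2 : k - i ≤ k := by omega
          have := hchain (k - i) hj2
          have e : a - ((k - i : ℕ) : ZMod p) * r = b₀ + (i : ZMod p) * r := by
            rw [haeq]
            have : ((k - i : ℕ) : ZMod p) = (k : ZMod p) - (i : ZMod p) := by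
              rw [Nat.cast_sub (le_of_lt hki)]
            rw [this]; ring
          rw [e] at this
          exact hnot this
    refine ⟨b₀, ?_⟩
    have hsub : apSet b₀ r B.card ⊆ B := by
      intro x hx
      rw [mem_apSet_iff] at hx
      obtain ⟨i, hi, rfl⟩ := hx
      exact key i hi
    have hc : (apSet b₀ r B.card).card = B.card := apSet_card hr (le_of_lt hcard)
    exact (Finset.eq_of_subset_of_card_le hsub (le_of_eq hc.symm)).symm


/-- Cauchy–Davenport, in the useful form. -/
lemma cd {A B : Finset (ZMod p)} (hA : A.Nonempty) (hB : B.Nonempty) (hlt : #(A + B) < p) :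
    #A + #B - 1 ≤ #(A + B) := by
  have h := ZMod.cauchy_davenport Fact.out hA hB
  rcases min_le_iff.mp h with h' | h'
  · omega
  · exact h'

lemma card_pair_add (b r : ZMod p) (B : Finset (ZMod p)) :
    #(apSet b r 2 + B) = #(B ∪ B.image (· + r)) := by
  have h2 : apSet b r 2 = {b, b + r} := by
    ext x
    simp only [apSet, Finset.mem_image, Finset.mem_range, Finset.mem_insert,
      Finset.mem_singleton]
    constructor
    · rintro ⟨i, hi, rfl⟩
      interval_cases i <;> simp
    · rintro (rfl | rfl)
      · exact ⟨0, by norm_num⟩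
      · exact ⟨1, by norm_num⟩
  rw [h2]
  have : ({b, b + r} : Finset (ZMod p)) + B = (B ∪ B.image (· + r)).image (· + b) := by
    ext x
    simp only [Finset.mem_add, Finset.mem_insert, Finset.mem_singleton, Finset.mem_image,
      Finset.mem_union]
    constructor
    · rintro ⟨u, (rfl | rfl), v, hv, rfl⟩
      · exact ⟨v, Or.inl hv, by ring⟩
      · exact ⟨v + r, Or.inr ⟨v, hv, rfl⟩, by ring⟩
    · rintro ⟨y, (hy | ⟨v, hv, rfl⟩), rfl⟩
      · exact ⟨b, Or.inl rfl, y, hy, by ring⟩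
      · exact ⟨b + r, Or.inr rfl, v, hv, by ring⟩
  rw [this, Finset.card_image_of_injective _ (add_left_injective b)]

/-- If `B ∪ (B + r)` is barely larger than `B`, then `B` is an AP with difference `r`. -/
lemma ap_of_union_small {B : Finset (ZMod p)} {r : ZMod p} (hr : r ≠ 0) (hB : 1 ≤ #B)
    (hBp : #B + 1 < p) (hU : #(B ∪ B.image (· + r)) ≤ #B + 1) :
    ∃ b, B = apSet b r #B := by
  have himg : #(B.image (· + r)) = #B := Finset.card_image_of_injective _ (add_left_injective r)
  have hinter : #B - 1 ≤ #(B ∩ B.image (· + r)) := by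
    have := Finset.card_union_add_card_inter B (B.image (· + r))
    omega
  have hset : B ∩ B.image (· + r) = B.filter (fun x => x - r ∈ B) := by
    ext x
    simp only [Finset.mem_inter, Finset.mem_image, Finset.mem_filter]
    constructor
    · rintro ⟨hx, y, hy, rfl⟩
      exact ⟨hx, by simpa using hy⟩
    · rintro ⟨hx, hxr⟩
      exact ⟨hx, x - r, hxr, by ring⟩
  have hfilters : #(B.filter (fun x => x - r ∈ B)) + #(B.filter (fun x => x - r ∉ B)) = #B := by
    simpa using Finset.card_filter_add_card_filter_not (s := B)
      (p := fun x => x - r ∈ B)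
  rw [hset] at hinter
  have h1 : #(B.filter (fun x => x - r ∉ B)) ≤ 1 := by omega
  exact arc hr (Finset.card_pos.mp (by omega)) (by omega) h1

/-- From a critical pair whose first member is an AP, the second member is an AP too. -/
lemma crit_B_ap {X B : Finset (ZMod p)} {x₀ r : ZMod p} (hr : r ≠ 0)
    (hX : X = apSet x₀ r #X) (hX2 : 2 ≤ #X) (hB2 : 2 ≤ #B)
    (hcrit : #(X + B) = #X + #B - 1) (hp2 : #(X + B) ≤ p - 2) :
    ∃ b₀, B = apSet b₀ r #B := by
  have hp5 : 5 ≤ p := by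
    have : 3 ≤ #(X + B) := by omega
    omega
  set α := #X with hα
  have hXsplit : X = apSet x₀ r 2 + apSet 0 r (α - 1) := by
    rw [apSet_add_apSet (by norm_num) (by omega), hX]
    congr 1 <;> [skip; omega]
    ring
  have hXB : X + B = apSet 0 r (α - 1) + (apSet x₀ r 2 + B) := by
    rw [hXsplit, add_comm (apSet x₀ r 2) (apSet 0 r (α - 1)), add_assoc]
  have hcard1 : #(apSet 0 r (α - 1)) = α - 1 := by
    apply apSet_card hr; omega
  have hne1 : (apSet 0 r (α - 1)).Nonempty := by
    rw [← Finset.card_pos, hcard1]; omega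
  have hne2 : (apSet x₀ r 2 + B).Nonempty := by
    apply Finset.Nonempty.add
    · rw [← Finset.card_pos, apSet_card hr (by omega)]; norm_num
    · exact Finset.card_pos.mp (by omega)
  have hcdapp : #(apSet 0 r (α - 1)) + #(apSet x₀ r 2 + B) - 1 ≤ #(X + B) := by
    rw [hXB]; exact cd hne1 hne2 (by rw [← hXB]; omega)
  rw [hcard1, card_pair_add] at hcdapp
  have hU : #(B ∪ B.image (· + r)) ≤ #B + 1 := by omega
  obtain ⟨b₀, hb₀⟩ := ap_of_union_small hr (by omega) (by omega) hU
  exact ⟨b₀, hb₀⟩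

lemma apSet_union_shift {q r : ZMod p} {M : ℕ} (hM : 1 ≤ M) :
    apSet q r M ∪ (apSet q r M).image (· + r) = apSet q r (M + 1) := by
  ext x
  simp only [Finset.mem_union, mem_apSet_iff, Finset.mem_image]
  constructor
  · rintro (⟨i, hi, rfl⟩ | ⟨y, ⟨i, hi, rfl⟩, rfl⟩)
    · exact ⟨i, by omega, rfl⟩
    · exact ⟨i + 1, by omega, by push_cast; ring⟩
  · rintro ⟨i, hi, rfl⟩
    rcases Nat.lt_or_ge i M with h | h
    · exact Or.inl ⟨i, h, rfl⟩
    · have hiM : i = M := by omega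
      refine Or.inr ⟨q + ((i - 1 : ℕ) : ZMod p) * r, ⟨i - 1, by omega, rfl⟩, ?_⟩
      have : ((i - 1 : ℕ) : ZMod p) = (i : ZMod p) - 1 := by
        rw [Nat.cast_sub (by omega)]; norm_num
      rw [this]; ring

/-- From a critical pair whose sumset is an AP, the second member is an AP. -/
lemma ap_of_crit_sum {X B : Finset (ZMod p)} {q r : ZMod p} (hr : r ≠ 0)
    (hXne : X.Nonempty) (hB2 : 2 ≤ #B) (hcrit : #(X + B) = #X + #B - 1)
    (hp2 : #(X + B) ≤ p - 2) (hap : X + B = apSet q r (#(X + B))) :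
    ∃ b₀, B = apSet b₀ r #B := by
  set M := #(X + B) with hM
  have hppos : 2 ≤ p := (Fact.out : p.Prime).two_le
  have hM1 : 1 ≤ M := by
    have : (X + B).Nonempty := Finset.Nonempty.add hXne (Finset.card_pos.mp (by omega))
    exact Finset.card_pos.mpr this
  have hsplit : X + (B ∪ B.image (· + r)) = apSet q r (M + 1) := by
    rw [Finset.add_union]
    have hsing : ∀ (s : Finset (ZMod p)), s + {r} = s.image (· + r) := by
      intro s; ext x
      simp only [Finset.mem_add, Finset.mem_singleton, Finset.mem_image]
      constructor
      · rintro ⟨y, hy, b, rfl, rfl⟩; exact ⟨y, hy, rfl⟩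
      · rintro ⟨y, hy, rfl⟩; exact ⟨y, hy, r, rfl, rfl⟩
    have h2 : X + B.image (· + r) = (X + B).image (· + r) := by
      rw [← hsing, ← hsing, add_assoc]
    rw [h2, hap, apSet_union_shift hM1]
  have hcardsum : #(X + (B ∪ B.image (· + r))) = M + 1 := by
    rw [hsplit]; exact apSet_card hr (by omega)
  have hUne : (B ∪ B.image (· + r)).Nonempty := by
    apply Finset.Nonempty.mono Finset.subset_union_left (Finset.card_pos.mp (by omega))
  have hcd2 : #X + #(B ∪ B.image (· + r)) - 1 ≤ M + 1 := by
    rw [← hcardsum]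
    exact cd hXne hUne (by omega)
  have hU : #(B ∪ B.image (· + r)) ≤ #B + 1 := by
    have hXpos : 1 ≤ #X := Finset.card_pos.mpr hXne
    omega
  have hXpos : 1 ≤ #X := Finset.card_pos.mpr hXne
  exact ap_of_union_small hr (by omega) (by omega) hU

lemma add_singleton' (s : Finset (ZMod p)) (a : ZMod p) : s + {a} = s.image (· + a) := by
  ext x
  simp only [Finset.mem_add, Finset.mem_singleton, Finset.mem_image]
  constructor
  · rintro ⟨y, hy, b, rfl, rfl⟩; exact ⟨y, hy, rfl⟩
  · rintro ⟨y, hy, rfl⟩; exact ⟨y, hy, a, rfl, rfl⟩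

lemma apSet_image_add {q r t : ZMod p} {N : ℕ} :
    (apSet q r N).image (· + t) = apSet (q + t) r N := by
  ext x
  simp only [Finset.mem_image, mem_apSet_iff]
  constructor
  · rintro ⟨y, ⟨i, hi, rfl⟩, rfl⟩; exact ⟨i, hi, by ring⟩
  · rintro ⟨i, hi, rfl⟩; exact ⟨q + (i : ZMod p) * r, ⟨i, hi, rfl⟩, by ring⟩

/-- Case 2a: all translate-intersections tiny leads to contradiction. -/
lemma case2a {X B : Finset (ZMod p)} (hX2 : 2 ≤ #X) (hB2 : 2 ≤ #B)
    (hcrit : #(X + B) = #X + #B - 1)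
    (hn : ∀ e : ZMod p, #(B.filter (fun b => b + e ∈ X)) ≤ 1) : False := by
  have hdisj : ∀ b₁ ∈ B, ∀ b₂ ∈ B, b₁ ≠ b₂ →
      Disjoint (X.image (· + b₁)) (X.image (· + b₂)) := by
    intro b₁ hb₁ b₂ hb₂ hne
    rw [Finset.disjoint_left]
    rintro a ha₁ ha₂
    simp only [Finset.mem_image] at ha₁ ha₂
    obtain ⟨x₁, hx₁, rfl⟩ := ha₁
    obtain ⟨x₂, hx₂, he⟩ := ha₂
    -- x₂ + b₂ = x₁ + b₁
    have h2 : 2 ≤ #(B.filter (fun b => b + (x₁ - b₂) ∈ X)) := by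
      have hm1 : b₂ ∈ B.filter (fun b => b + (x₁ - b₂) ∈ X) := by
        simp only [Finset.mem_filter]
        exact ⟨hb₂, by simpa using hx₁⟩
      have hm2 : b₁ ∈ B.filter (fun b => b + (x₁ - b₂) ∈ X) := by
        simp only [Finset.mem_filter]
        refine ⟨hb₁, ?_⟩
        have : b₁ + (x₁ - b₂) = x₂ := by
          have h' : x₂ + b₂ = x₁ + b₁ := he
          linear_combination -h'
        rw [this]; exact hx₂
      exact Finset.one_lt_card.mpr ⟨b₂, hm1, b₁, hm2, fun h => hne h.symm⟩
    have := hn (x₁ - b₂)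
    omega
  have hXB : X + B = B.biUnion (fun b => X.image (· + b)) := by
    ext x
    simp only [Finset.mem_add, Finset.mem_biUnion, Finset.mem_image]
    constructor
    · rintro ⟨y, hy, b, hb, rfl⟩; exact ⟨b, hb, y, hy, rfl⟩
    · rintro ⟨b, hb, y, hy, rfl⟩; exact ⟨y, hy, b, hb, rfl⟩
  have hcard : #(X + B) = #B * #X := by
    rw [hXB, Finset.card_biUnion]
    · rw [Finset.sum_congr rfl (fun b _ => Finset.card_image_of_injective X
        (add_left_injective b))]
      rw [Finset.sum_const, smul_eq_mul]
    · exact fun b₁ h₁ b₂ h₂ hne => hdisj b₁ h₁ b₂ h₂ hne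
  have h1 : 2 * #X ≤ #B * #X := Nat.mul_le_mul_right _ hB2
  have h2 : 2 * #B ≤ #B * #X := by
    calc 2 * #B ≤ #X * #B := Nat.mul_le_mul_right _ hX2
      _ = #B * #X := Nat.mul_comm _ _
  omega

/-- The Sidon-set endgame contradiction. -/
lemma sidon_case {B : Finset (ZMod p)} (hB3 : 3 ≤ #B)
    (hsidon : ∀ δ : ZMod p, δ ≠ 0 → #(B.filter (fun b => b + δ ∈ B)) ≤ 1)
    (hBB : #(B + B) = 2 * #B - 1) : False := by
  have hp3 : (2 : ZMod p) ≠ 0 := by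
    intro h2
    have hd : p ∣ 2 := by
      have := (ZMod.natCast_eq_zero_iff 2 p).mp (by exact_mod_cast h2)
      exact this
    have := Nat.le_of_dvd (by norm_num) hd
    have hcard : #B ≤ p := by
      simpa [ZMod.card] using Finset.card_le_card (Finset.subset_univ B)
    omega
  -- two representations with the same sum share a coordinate
  have pairLemma : ∀ a ∈ B, ∀ b ∈ B, ∀ a' ∈ B, ∀ b' ∈ B,
      a + b = a' + b' → a = a' ∨ a = b' := by
    intro a ha b hb a' ha' b' hb' hsum
    by_contra hcon
    push_neg at hcon
    obtain ⟨hne1, hne2⟩ := hcon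
    set δ := a - a' with hδ
    have hδ0 : δ ≠ 0 := sub_ne_zero.mpr hne1
    have hm1 : a' ∈ B.filter (fun x => x + δ ∈ B) := by
      simp only [Finset.mem_filter]
      exact ⟨ha', by rw [hδ]; simpa using ha⟩
    have hm2 : b ∈ B.filter (fun x => x + δ ∈ B) := by
      simp only [Finset.mem_filter]
      refine ⟨hb, ?_⟩
      have : b + δ = b' := by rw [hδ]; linear_combination hsum
      rw [this]; exact hb'
    have hab : a' ≠ b := by
      intro h
      subst h
      exact hne2 (by linear_combination hsum)
    have : 2 ≤ #(B.filter (fun x => x + δ ∈ B)) :=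
      Finset.one_lt_card.mpr ⟨a', hm1, b, hm2, hab⟩
    have := hsidon δ hδ0
    omega
  set r : ZMod p → ℕ := fun c => #(B.filter (fun a => c - a ∈ B)) with hrdef
  have rle : ∀ c, r c ≤ 2 := by
    intro c
    by_contra hc
    push_neg at hc
    obtain ⟨a₁, a₂, a₃, h₁, h₂, h₃, h12, h13, h23⟩ := Finset.two_lt_card_iff.mp hc
    simp only [Finset.mem_filter] at h₁ h₂ h₃
    have e12 : a₁ = a₂ ∨ a₁ = c - a₂ :=
      pairLemma a₁ h₁.1 (c - a₁) h₁.2 a₂ h₂.1 (c - a₂) h₂.2 (by ring)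
    have e13 : a₁ = a₃ ∨ a₁ = c - a₃ :=
      pairLemma a₁ h₁.1 (c - a₁) h₁.2 a₃ h₃.1 (c - a₃) h₃.2 (by ring)
    rcases e12 with h | h
    · exact h12 h
    · rcases e13 with h' | h'
      · exact h13 h'
      · apply h23
        have hcc : c - a₂ = c - a₃ := by rw [← h, ← h']
        linear_combination -hcc
  have rdiag : ∀ b ∈ B, r (b + b) = 1 := by
    intro b hb
    have : B.filter (fun a => b + b - a ∈ B) = {b} := by
      apply Finset.eq_singleton_iff_unique_mem.mpr
      constructor
      · simp only [Finset.mem_filter]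
        exact ⟨hb, by simpa using hb⟩
      · intro a ha
        simp only [Finset.mem_filter] at ha
        have := pairLemma a ha.1 (b + b - a) ha.2 b hb b hb (by ring)
        rcases this with h | h
        · exact h
        · linear_combination h
    show #(B.filter (fun a => b + b - a ∈ B)) = 1
    rw [this, Finset.card_singleton]
  have hsum : ∑ c ∈ B + B, r c = #B * #B := by
    have hfib := Finset.card_eq_sum_card_fiberwise
      (f := fun q : ZMod p × ZMod p => q.1 + q.2) (s := B ×ˢ B) (t := B + B)
      (by rintro ⟨a, b⟩ hq
          simp only [Finset.mem_coe, Finset.mem_product] at hq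
          exact Finset.add_mem_add hq.1 hq.2)
    rw [Finset.card_product] at hfib
    rw [hfib]
    apply Finset.sum_congr rfl
    intro c _
    rw [hrdef]
    have himg : (B ×ˢ B).filter (fun q => q.1 + q.2 = c)
        = (B.filter (fun a => c - a ∈ B)).image (fun a => (a, c - a)) := by
      ext q
      simp only [Finset.mem_filter, Finset.mem_product, Finset.mem_image, Prod.ext_iff]
      constructor
      · rintro ⟨⟨h1, h2⟩, h3⟩
        have e : c - q.1 = q.2 := by linear_combination -h3
        exact ⟨q.1, ⟨h1, by rw [e]; exact h2⟩, rfl, e⟩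
      · rintro ⟨a, ⟨h1, h2⟩, ha1, ha2⟩
        subst ha1
        refine ⟨⟨h1, ?_⟩, ?_⟩
        · rw [← ha2]; exact h2
        · linear_combination -ha2
    calc r c = #(B.filter (fun a => c - a ∈ B)) := rfl
      _ = #((B.filter (fun a => c - a ∈ B)).image (fun a => (a, c - a))) :=
          (Finset.card_image_of_injective _ (fun x y h => (Prod.ext_iff.mp h).1)).symm
      _ = #((B ×ˢ B).filter (fun q => q.1 + q.2 = c)) := by rw [himg]
  set D : Finset (ZMod p) := B.image (fun b => b + b) with hD
  have hDsub : D ⊆ B + B := by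
    intro x hx
    simp only [hD, Finset.mem_image] at hx
    obtain ⟨b, hb, rfl⟩ := hx
    exact Finset.add_mem_add hb hb
  have hDcard : #D = #B := by
    rw [hD]
    apply Finset.card_image_of_injective
    intro x y hxy
    have : (2 : ZMod p) * x = 2 * y := by linear_combination hxy
    exact mul_left_cancel₀ hp3 this
  have hsum2 : ∑ c ∈ (B + B) \ D, r c + ∑ c ∈ D, r c = ∑ c ∈ B + B, r c :=
    Finset.sum_sdiff hDsub
  have hDsum : ∑ c ∈ D, r c = #B := by
    have : ∀ c ∈ D, r c = 1 := by
      intro c hc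
      simp only [hD, Finset.mem_image] at hc
      obtain ⟨b, hb, rfl⟩ := hc
      exact rdiag b hb
    rw [Finset.sum_congr rfl this, Finset.sum_const, smul_eq_mul, mul_one, hDcard]
  have hrest : ∑ c ∈ (B + B) \ D, r c ≤ (#(B + B) - #D) * 2 := by
    calc ∑ c ∈ (B + B) \ D, r c ≤ ∑ _c ∈ (B + B) \ D, 2 :=
          Finset.sum_le_sum (fun c _ => rle c)
      _ = #((B + B) \ D) * 2 := by rw [Finset.sum_const, smul_eq_mul]
      _ = (#(B + B) - #D) * 2 := by rw [Finset.card_sdiff_of_subset hDsub]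
  have hfinal : #B * #B ≤ #B + (2 * #B - 1 - #B) * 2 := by
    have h2 : (#(B+B) - #D) * 2 = (2 * #B - 1 - #B) * 2 := by rw [hBB, hDcard]
    omega
  have h3 : 3 * #B ≤ #B * #B := Nat.mul_le_mul_right _ hB3
  omega

/-- The inner induction of Vosper's theorem: `B` is fixed with `0 ∈ B`, `3 ≤ #B`. -/
lemma inner {B : Finset (ZMod p)} (h0B : (0 : ZMod p) ∈ B) (hB3 : 3 ≤ #B)
    (OIH : ∀ X' B' : Finset (ZMod p), #B' < #B → 2 ≤ #X' → 2 ≤ #B' →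
      #(X' + B') = #X' + #B' - 1 → #(X' + B') ≤ p - 2 →
      ∃ q r, r ≠ 0 ∧ X' + B' = apSet q r #(X' + B')) :
    ∀ N X, #X = N → 2 ≤ #X → #(X + B) = #X + #B - 1 → #(X + B) ≤ p - 2 →
    ∃ q r, r ≠ 0 ∧ X + B = apSet q r #(X + B) := by
  intro N
  induction N using Nat.strong_induction_on with
  | _ N IIH =>
  intro X hXN hX2 hcrit hp2
  set k := #B with hk
  have hBne : B.Nonempty := ⟨0, h0B⟩
  have hXne : X.Nonempty := Finset.card_pos.mp (by omega)
  have hXsub : X ⊆ X + B := by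
    intro x hx
    have := Finset.add_mem_add hx h0B
    simpa using this
  have hXle : #X ≤ #(X + B) := Finset.card_le_card hXsub
  by_cases hgood : ∃ e : ZMod p, 2 ≤ #(B.filter (fun b => b + e ∈ X)) ∧
      #(B.filter (fun b => b + e ∈ X)) ≤ k - 1
  · -- transform case
    obtain ⟨e, hn2, hnk⟩ := hgood
    set Be := B.filter (fun b => b + e ∈ X) with hBe
    set Xe := X ∪ B.image (· + e) with hXe
    have hsub : Xe + Be ⊆ X + B := by
      intro z hz
      rw [Finset.mem_add] at hz
      obtain ⟨u, hu, b', hb', rfl⟩ := hz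
      rw [hXe, Finset.mem_union] at hu
      rw [hBe, Finset.mem_filter] at hb'
      rcases hu with hu | hu
      · exact Finset.add_mem_add hu hb'.1
      · rw [Finset.mem_image] at hu
        obtain ⟨b, hb, rfl⟩ := hu
        have heq : b + e + b' = (b' + e) + b := by ring
        rw [heq]
        exact Finset.add_mem_add hb'.2 hb
    have hintcard : #(X ∩ B.image (· + e)) = #Be := by
      have himg : X ∩ B.image (· + e) = Be.image (· + e) := by
        ext y
        simp only [Finset.mem_inter, Finset.mem_image, hBe, Finset.mem_filter]
        constructor
        · rintro ⟨hy, b, hb, rfl⟩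
          exact ⟨b, ⟨hb, hy⟩, rfl⟩
        · rintro ⟨b, ⟨hb, hby⟩, rfl⟩
          exact ⟨hby, b, hb, rfl⟩
      rw [himg, Finset.card_image_of_injective _ (add_left_injective e)]
    have hXecard : #Xe + #Be = #X + k := by
      have hu := Finset.card_union_add_card_inter X (B.image (· + e))
      rw [Finset.card_image_of_injective _ (add_left_injective e)] at hu
      have hXe' : #Xe = #(X ∪ B.image (· + e)) := by rw [hXe]
      omega
    have hXe2 : 2 ≤ #Xe :=
      le_trans hX2 (Finset.card_le_card (by rw [hXe]; exact Finset.subset_union_left))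
    have hBene : Be.Nonempty := Finset.card_pos.mp (by omega)
    have hXene : Xe.Nonempty := Finset.card_pos.mp (by omega)
    have hcd := cd hXene hBene (lt_of_le_of_lt (Finset.card_le_card hsub) (by omega))
    have hXeBe : Xe + Be = X + B := by
      apply Finset.eq_of_subset_of_card_le hsub
      omega
    have hcrit2 : #(Xe + Be) = #Xe + #Be - 1 := by
      rw [hXeBe]; omega
    obtain ⟨q, r, hr, hap⟩ := OIH Xe Be (by omega) hXe2 (by omega) hcrit2
      (by rw [hXeBe]; omega)
    exact ⟨q, r, hr, by rwa [hXeBe] at hap⟩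
  · push_neg at hgood
    have hle : ∀ e : ZMod p, #(B.filter (fun b => b + e ∈ X)) ≤ k :=
      fun e => Finset.card_le_card (Finset.filter_subset _ _)
    have hvals : ∀ e : ZMod p, #(B.filter (fun b => b + e ∈ X)) ≤ 1 ∨
        #(B.filter (fun b => b + e ∈ X)) = k := by
      intro e
      rcases Nat.lt_or_ge (#(B.filter (fun b => b + e ∈ X))) 2 with h | h
      · exact Or.inl (by omega)
      · have h1 := hgood e h
        have h2 := hle e
        omega
    have hfull : ∀ e : ZMod p, #(B.filter (fun b => b + e ∈ X)) = k ↔ ∀ b ∈ B, b + e ∈ X := by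
      intro e
      constructor
      · intro h
        have heq : B.filter (fun b => b + e ∈ X) = B :=
          Finset.eq_of_subset_of_card_le (Finset.filter_subset _ _) (by omega)
        intro b hb
        rw [← heq] at hb
        exact (Finset.mem_filter.mp hb).2
      · intro h
        rw [Finset.filter_true_of_mem h]
    set F := Finset.univ.filter (fun e : ZMod p => ∀ b ∈ B, b + e ∈ X) with hF
    have hmemF : ∀ e : ZMod p, e ∈ F ↔ ∀ b ∈ B, b + e ∈ X := by
      intro e; rw [hF]; simp
    by_cases hFne : F.Nonempty
    · -- HARD CASE
      obtain ⟨e₀, he₀⟩ := hFne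
      have he₀' : ∀ b ∈ B, b + e₀ ∈ X := (hmemF e₀).mp he₀
      have hkX : k ≤ #X := by
        have hsubim : B.image (· + e₀) ⊆ X := by
          intro y hy
          rw [Finset.mem_image] at hy
          obtain ⟨b, hb, rfl⟩ := hy
          exact he₀' b hb
        calc k = #(B.image (· + e₀)) :=
              (Finset.card_image_of_injective _ (add_left_injective e₀)).symm
          _ ≤ #X := Finset.card_le_card hsubim
      set E := (X + B) \ X with hE
      have hEcard : #E = k - 1 := by rw [hE, Finset.card_sdiff_of_subset hXsub]; omega
      set S := (X ×ˢ B) with hS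
      have hSsplit := Finset.card_filter_add_card_filter_not (s := S)
        (p := fun q : ZMod p × ZMod p => q.1 + q.2 ∈ X)
      have hScard : #S = #X * k := by rw [hS, Finset.card_product]
      have hS2 : #(S.filter (fun q : ZMod p × ZMod p => ¬ q.1 + q.2 ∈ X)) ≤ (k-1) * (k-1) := by
        have hmaps : ∀ q ∈ S.filter (fun q : ZMod p × ZMod p => ¬ q.1 + q.2 ∈ X),
            q.1 + q.2 ∈ E := by
          rintro ⟨x, b⟩ hq
          rw [Finset.mem_filter, hS, Finset.mem_product] at hq
          rw [hE, Finset.mem_sdiff]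
          exact ⟨Finset.add_mem_add hq.1.1 hq.1.2, hq.2⟩
        rw [Finset.card_eq_sum_card_fiberwise hmaps]
        have hfiber : ∀ z ∈ E,
            #((S.filter (fun q : ZMod p × ZMod p => ¬ q.1 + q.2 ∈ X)).filter
              (fun q => q.1 + q.2 = z)) ≤ k - 1 := by
          intro z hz
          have hcardle : #(B.erase 0) = k - 1 := by
            rw [Finset.card_erase_of_mem h0B]
          rw [← hcardle]
          apply Finset.card_le_card_of_injOn (fun q => q.2)
          · rintro ⟨x, b⟩ hq
            simp only [Finset.mem_coe, Finset.mem_filter, hS, Finset.mem_product] at hq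
            rw [Finset.mem_coe, Finset.mem_erase]
            refine ⟨?_, hq.1.1.2⟩
            rintro rfl
            apply hq.1.2
            have hx : x + 0 = z := hq.2
            rw [add_zero] at hx
            rw [hE, Finset.mem_sdiff] at hz
            exact absurd (hx ▸ hz.2) (by simp [hq.1.1.1])
          · rintro ⟨x, b⟩ hq ⟨x', b'⟩ hq' h
            simp only [Finset.mem_coe, Finset.mem_filter] at hq hq'
            simp only at h
            subst h
            have hx : x = x' := by
              have e1 : x + b = z := hq.2
              have e2 : x' + b = z := hq'.2
              linear_combination e1 - e2
            rw [hx]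
        calc ∑ z ∈ E, #((S.filter (fun q : ZMod p × ZMod p => ¬ q.1 + q.2 ∈ X)).filter
              (fun q => q.1 + q.2 = z))
            ≤ ∑ _z ∈ E, (k-1) := Finset.sum_le_sum hfiber
          _ = #E * (k-1) := by rw [Finset.sum_const, smul_eq_mul]
          _ = (k-1) * (k-1) := by rw [hEcard]
      set φ := #(X.filter (· ∈ F)) with hφ
      have hS1 : #(S.filter (fun q : ZMod p × ZMod p => q.1 + q.2 ∈ X)) ≤
          φ * k + (#X - φ) := by
        have hmaps : ∀ q ∈ S.filter (fun q : ZMod p × ZMod p => q.1 + q.2 ∈ X), q.1 ∈ X := by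
          rintro ⟨x, b⟩ hq
          rw [Finset.mem_filter, hS, Finset.mem_product] at hq
          exact hq.1.1
        rw [Finset.card_eq_sum_card_fiberwise hmaps]
        have hfx : ∀ x ∈ X, #((S.filter (fun q : ZMod p × ZMod p => q.1 + q.2 ∈ X)).filter
            (fun q => q.1 = x)) = #(B.filter (fun b => b + x ∈ X)) := by
          intro x hx
          have himg : (S.filter (fun q : ZMod p × ZMod p => q.1 + q.2 ∈ X)).filter
              (fun q => q.1 = x) = (B.filter (fun b => b + x ∈ X)).image (fun b => (x, b)) := by
            ext q
            simp only [Finset.mem_filter, hS, Finset.mem_product, Finset.mem_image,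
              Prod.ext_iff]
            constructor
            · rintro ⟨⟨⟨hq1, hq2⟩, hq3⟩, hq4⟩
              refine ⟨q.2, ⟨hq2, ?_⟩, hq4.symm, rfl⟩
              rw [add_comm, ← hq4]; exact hq3
            · rintro ⟨b, ⟨hb1, hb2⟩, hq1, hq2⟩
              refine ⟨⟨⟨?_, ?_⟩, ?_⟩, ?_⟩
              · rw [← hq1]; exact hx
              · rw [← hq2]; exact hb1
              · rw [← hq1, ← hq2, add_comm]; exact hb2
              · rw [← hq1]
          rw [himg, Finset.card_image_of_injective _ (fun a b h => (Prod.ext_iff.mp h).2)]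
        rw [Finset.sum_congr rfl hfx]
        have hpoint : ∀ x ∈ X, #(B.filter (fun b => b + x ∈ X)) ≤
            if x ∈ F then k else 1 := by
          intro x hx
          by_cases hxF : x ∈ F
          · rw [if_pos hxF]; exact hle x
          · rw [if_neg hxF]
            rcases hvals x with h | h
            · exact h
            · exact absurd ((hmemF x).mpr ((hfull x).mp h)) hxF
        calc ∑ x ∈ X, #(B.filter (fun b => b + x ∈ X))
            ≤ ∑ x ∈ X, (if x ∈ F then k else 1) := Finset.sum_le_sum hpoint
          _ = φ * k + (#X - φ) := by
              rw [Finset.sum_ite, Finset.sum_const, Finset.sum_const, smul_eq_mul, smul_eq_mul,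
                mul_one]
              have hc2 := Finset.card_filter_add_card_filter_not (s := X)
                (p := fun x => x ∈ F)
              rw [hφ]
              omega
      -- conclude #X ≤ φ + (k - 1)
      have hφle : φ ≤ #X := Finset.card_le_card (Finset.filter_subset _ _)
      have hmain : #X ≤ φ + (k - 1) := by
        obtain ⟨c, hc⟩ := Nat.exists_eq_add_of_le hφle
        have hfromsplit : #X * k ≤ φ * k + (#X - φ) + (k-1)*(k-1) := by omega
        rw [hc, add_mul] at hfromsplit
        have hck : c * k ≤ c + (k-1)*(k-1) := by omega
        have hsplitk : c * k = c * (k-1) + c * 1 := by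
          rw [← Nat.mul_add]
          congr 1
          omega
        have hck2 : c * (k-1) ≤ (k-1) * (k-1) := by omega
        have hcle : c ≤ k - 1 := Nat.le_of_mul_le_mul_right
          (by rw [Nat.mul_comm (k-1) (k-1)] at hck2; exact hck2) (by omega)
        omega
      have hφF : φ ≤ #F := by
        apply Finset.card_le_card
        intro x hx
        exact (Finset.mem_filter.mp hx).2
      have hBF : B + F ⊆ X := by
        intro z hz
        rw [Finset.mem_add] at hz
        obtain ⟨b, hb, e, he, rfl⟩ := hz
        exact (hmemF e).mp he b hb
      have hFneX : F.Nonempty := ⟨e₀, he₀⟩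
      have hcdF := cd hBne hFneX (lt_of_le_of_lt (Finset.card_le_card hBF) (by omega))
      have hBFle : #(B + F) ≤ #X := Finset.card_le_card hBF
      have hFeq : #F = #X - k + 1 := by omega
      have hBFX : B + F = X := by
        apply Finset.eq_of_subset_of_card_le hBF
        omega
      rcases Nat.lt_or_ge (#F) 2 with hFlt2 | hF2
      · -- #F = 1 : the Sidon endgame
        exfalso
        have hF1 : #F = 1 := by
          have := Finset.card_pos.mpr hFneX
          omega
        obtain ⟨e₀', hFsing⟩ := Finset.card_eq_one.mp hF1
        have hXim : X = B.image (· + e₀') := by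
          rw [← hBFX, hFsing, add_singleton']
        have hXk : #X = k := by
          rw [hXim, Finset.card_image_of_injective _ (add_left_injective e₀')]
        apply sidon_case hB3 ?_ ?_
        · intro δ hδ
          have hδe : δ + e₀' ∉ F := by
            intro hmem
            rw [hFsing, Finset.mem_singleton] at hmem
            exact hδ (by linear_combination hmem)
          rcases hvals (δ + e₀') with h | h
          · refine le_trans (Finset.card_le_card ?_) h
            intro b hb
            rw [Finset.mem_filter] at hb ⊢
            refine ⟨hb.1, ?_⟩
            rw [hXim, Finset.mem_image]
            exact ⟨b + δ, hb.2, by ring⟩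
          · exact absurd ((hmemF _).mpr ((hfull _).mp h)) hδe
        · -- #(B + B) = 2 * #B - 1
          have hXB2 : X + B = (B + B).image (· + e₀') := by
            rw [hXim, ← add_singleton', add_right_comm, add_singleton']
          have hcards : #(X + B) = #(B + B) := by
            rw [hXB2, Finset.card_image_of_injective _ (add_left_injective e₀')]
          omega
      · -- #F ≥ 2
        have hXap : ∃ q r, r ≠ 0 ∧ X = apSet q r #X := by
          have hcritBF : #(B + F) = #B + #F - 1 := by
            rw [hBFX]
            omega
          have hp2BF : #(B + F) ≤ p - 2 := by
            rw [hBFX]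
            omega
          rcases Nat.lt_or_ge (#F) k with hFk | hFk
          · obtain ⟨q, r, hr, hap⟩ := OIH B F hFk (by omega) hF2 hcritBF hp2BF
            refine ⟨q, r, hr, ?_⟩
            rw [← hBFX]
            exact hap
          · have hltN : #F < N := by omega
            have hcritFB : #(F + B) = #F + #B - 1 := by
              rw [add_comm F B, hBFX]
              omega
            obtain ⟨q, r, hr, hap⟩ := IIH (#F) hltN F rfl (by omega) hcritFB
              (by rw [add_comm F B, hBFX]; omega)
            refine ⟨q, r, hr, ?_⟩
            rw [← hBFX, ← add_comm F B]
            exact hap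
        obtain ⟨q, r, hr, hXapeq⟩ := hXap
        obtain ⟨b₀, hBap⟩ := crit_B_ap hr hXapeq hX2 (by omega) hcrit hp2
        refine ⟨q + b₀, r, hr, ?_⟩
        calc X + B = apSet q r #X + apSet b₀ r k := by rw [← hXapeq, ← hBap]
          _ = apSet (q + b₀) r (#X + k - 1) := apSet_add_apSet (by omega) (by omega)
          _ = apSet (q + b₀) r #(X + B) := by rw [hcrit]
    · -- case 2a : contradiction
      exfalso
      apply case2a hX2 (by omega) hcrit
      intro e
      rcases hvals e with h | h
      · exact h
      · exact absurd ⟨e, (hmemF e).mpr ((hfull e).mp h)⟩ hFne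

/-- Vosper's theorem for `ZMod p`: the sumset of a critical pair is an AP. -/
theorem vosper_sum : ∀ k, ∀ X B : Finset (ZMod p), #B = k → 2 ≤ #X → 2 ≤ #B →
    #(X + B) = #X + #B - 1 → #(X + B) ≤ p - 2 →
    ∃ q r, r ≠ 0 ∧ X + B = apSet q r #(X + B) := by
  intro k
  induction k using Nat.strong_induction_on with
  | _ k KIH =>
  intro X B hBk hX2 hB2 hcrit hp2
  have hp2' : 2 ≤ p := (Fact.out : p.Prime).two_le
  rcases Nat.lt_or_ge k 3 with hklt | hk3
  · -- base case: #B = 2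
    have hB2' : #B = 2 := by omega
    obtain ⟨b₁, b₂, hne, hBpair⟩ := Finset.card_eq_two.mp hB2'
    set r := b₂ - b₁ with hr
    have hr0 : r ≠ 0 := sub_ne_zero.mpr (Ne.symm hne)
    set Y := X.image (· + b₁) with hY
    have hYcard : #Y = #X := Finset.card_image_of_injective _ (add_left_injective b₁)
    have hXB : X + B = Y ∪ Y.image (· + r) := by
      rw [hBpair]
      rw [show ({b₁, b₂} : Finset (ZMod p)) = {b₁} ∪ {b₂} from rfl, Finset.add_union,
        add_singleton', add_singleton', hY, Finset.image_image]
      congr 1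
      ext y
      simp only [Finset.mem_image, Function.comp_apply]
      constructor
      · rintro ⟨x, hx, rfl⟩
        exact ⟨x, hx, by rw [hr]; ring⟩
      · rintro ⟨x, hx, rfl⟩
        exact ⟨x, hx, by rw [hr]; ring⟩
    have hUcard : #(Y ∪ Y.image (· + r)) = #Y + 1 := by
      rw [← hXB, hcrit, hYcard]
      omega
    have hXBcard : #(X + B) = #Y + 1 := by rw [hXB, hUcard]
    have hYp : #Y + 1 < p := by omega
    obtain ⟨y₀, hYap⟩ := ap_of_union_small hr0 (by omega) hYp (le_of_eq hUcard)
    refine ⟨y₀, r, hr0, ?_⟩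
    rw [hXB, hYap, apSet_union_shift (by omega), apSet_card hr0 (by omega)]
  · -- inductive step via the inner lemma
    have hBne : B.Nonempty := Finset.card_pos.mp (by omega)
    obtain ⟨b₀, hb₀⟩ := hBne
    set B' := B.image (· + (-b₀)) with hB'
    have h0B' : (0 : ZMod p) ∈ B' := by
      rw [hB', Finset.mem_image]
      exact ⟨b₀, hb₀, by ring⟩
    have hB'card : #B' = k := by
      rw [hB', Finset.card_image_of_injective _ (add_left_injective (-b₀)), hBk]
    have hXB' : X + B' = (X + B).image (· + (-b₀)) := by
      rw [hB', ← add_singleton', ← add_singleton', add_assoc]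
    have hXB'card : #(X + B') = #(X + B) := by
      rw [hXB', Finset.card_image_of_injective _ (add_left_injective (-b₀))]
    obtain ⟨q, r, hr, hap⟩ := inner h0B' (by omega)
      (fun X' B'' hlt hX'2 hB''2 hcrit'' hp2'' =>
        KIH (#B'') (by omega) X' B'' rfl hX'2 hB''2 hcrit'' hp2'')
      (#X) X rfl hX2 (by omega) (by omega)
    refine ⟨q + b₀, r, hr, ?_⟩
    have hback : (X + B').image (· + b₀) = X + B := by
      rw [hXB', Finset.image_image]
      have : ((· + b₀) ∘ (· + (-b₀)) : ZMod p → ZMod p) = id := by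
        funext x
        simp
      rw [this, Finset.image_id]
    rw [← hback, hap, apSet_image_add, hXB'card, apSet_card hr (by omega)]

/-- The number of solutions of `x^m = 1` in `ZMod p` when `m ∣ p - 1`. -/
lemma card_roots_eq {m : ℕ} (hm : 0 < m) (hdvd : m ∣ p - 1) :
    #(Finset.univ.filter (fun x : ZMod p => x ^ m = 1)) = m := by
  have hp2 : 2 ≤ p := (Fact.out : p.Prime).two_le
  apply le_antisymm
  · -- at most m roots of X^m - 1
    have hsub : Finset.univ.filter (fun x : ZMod p => x ^ m = 1) ⊆
        (Polynomial.nthRoots m (1 : ZMod p)).toFinset := by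
      intro x hx
      rw [Finset.mem_filter] at hx
      rw [Multiset.mem_toFinset, Polynomial.mem_nthRoots hm]
      exact hx.2
    calc #(Finset.univ.filter (fun x : ZMod p => x ^ m = 1))
        ≤ (Polynomial.nthRoots m (1 : ZMod p)).toFinset.card := Finset.card_le_card hsub
      _ ≤ Multiset.card (Polynomial.nthRoots m (1 : ZMod p)) := (Polynomial.nthRoots m _).toFinset_card_le
      _ ≤ m := Polynomial.card_nthRoots m 1
  · -- at least m : powers of an element of order m
    obtain ⟨g, hg⟩ := IsCyclic.exists_generator (α := (ZMod p)ˣ)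
    have hord : orderOf g = p - 1 := by
      rw [orderOf_eq_card_of_forall_mem_zpowers hg, Nat.card_eq_fintype_card, ZMod.card_units]
    set u := g ^ ((p - 1) / m) with hu
    have hordu : orderOf u = m := by
      rw [hu, orderOf_pow, hord]
      have h1 : (p - 1).gcd ((p - 1) / m) = (p - 1) / m := by
        apply Nat.gcd_eq_right
        exact Nat.div_dvd_of_dvd hdvd
      rw [h1]
      obtain ⟨c, hc⟩ := hdvd
      rw [hc]
      rw [Nat.mul_div_cancel_left _ hm]
      have hc0 : 0 < c := by
        rcases Nat.eq_zero_or_pos c with rfl | h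
        · simp at hc; omega
        · exact h
      rw [Nat.mul_div_cancel _ hc0]
    have hum : ((u : ZMod p)) ^ m = 1 := by
      rw [← Units.val_pow_eq_pow_val, ← hordu, pow_orderOf_eq_one, Units.val_one]
    have hmempow : ∀ i : ℕ,
        ((u : ZMod p)) ^ i ∈ Finset.univ.filter (fun x : ZMod p => x ^ m = 1) := by
      intro i
      rw [Finset.mem_filter]
      refine ⟨Finset.mem_univ _, ?_⟩
      rw [← pow_mul, mul_comm, pow_mul, hum, one_pow]
    have hsub2 : (Finset.range m).image (fun i : ℕ => ((u : ZMod p)) ^ i) ⊆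
        Finset.univ.filter (fun x : ZMod p => x ^ m = 1) := by
      intro y hy
      rw [Finset.mem_image] at hy
      obtain ⟨i, _, rfl⟩ := hy
      exact hmempow i
    have hcardim : #((Finset.range m).image (fun i : ℕ => ((u : ZMod p)) ^ i)) = m := by
      rw [Finset.card_image_of_injOn, Finset.card_range]
      intro i hi j hj hij
      simp only [Finset.mem_coe, Finset.mem_range] at hi hj
      have huij : u ^ i = u ^ j := Units.ext (by
        rw [Units.val_pow_eq_pow_val, Units.val_pow_eq_pow_val]; exact hij)
      exact pow_injOn_Iio_orderOf (by rw [hordu]; exact hi) (by rw [hordu]; exact hj) huij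
    calc m = #((Finset.range m).image (fun i : ℕ => ((u : ZMod p)) ^ i)) := hcardim.symm
      _ ≤ _ := Finset.card_le_card hsub2
lemma exists_pow_eq {n d m : ℕ} (hn : 1 ≤ n) (hd : d = Nat.gcd n (p - 1))
    (hdm : d * m = p - 1) (hm : 0 < m) {y : ZMod p} (hy : y ^ m = 1) :
    ∃ x : ZMod p, x ^ n = y := by
  have hyne : y ≠ 0 := by
    intro h
    rw [h, zero_pow (by omega)] at hy
    exact zero_ne_one hy
  obtain ⟨g, hg⟩ := IsCyclic.exists_generator (α := (ZMod p)ˣ)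
  have hord : orderOf g = p - 1 := by
    rw [orderOf_eq_card_of_forall_mem_zpowers hg, Nat.card_eq_fintype_card, ZMod.card_units]
  set yu := (Ne.isUnit hyne).unit with hyudef
  have hyu : (yu : ZMod p) = y := (Ne.isUnit hyne).unit_spec
  obtain ⟨t, ht⟩ := Subgroup.mem_zpowers_iff.mp (hg yu)
  have hym : yu ^ m = 1 := Units.ext (by
    rw [Units.val_pow_eq_pow_val, hyu, hy, Units.val_one])
  have hdvd : ((p - 1 : ℕ) : ℤ) ∣ t * m := by
    rw [← hord, orderOf_dvd_iff_zpow_eq_one, zpow_mul, ht, zpow_natCast, hym]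
  have hdt : (d : ℤ) ∣ t := by
    have h1 : (d : ℤ) * m ∣ t * m := by
      have : ((d * m : ℕ) : ℤ) ∣ t * m := by rw [hdm]; exact hdvd
      push_cast at this
      exact this
    exact (mul_dvd_mul_iff_right (by exact_mod_cast hm.ne' : (m : ℤ) ≠ 0)).mp h1
  obtain ⟨s, hs⟩ := hdt
  have hbez : (d : ℤ) = n * Nat.gcdA n (p - 1) + ((p - 1 : ℕ) : ℤ) * Nat.gcdB n (p - 1) := by
    rw [hd]
    exact_mod_cast Nat.gcd_eq_gcd_ab n (p - 1)
  set a := Nat.gcdA n (p - 1) with hadef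
  refine ⟨((g ^ (s * a) : (ZMod p)ˣ) : ZMod p), ?_⟩
  rw [← Units.val_pow_eq_pow_val, ← hyu, ← ht]
  congr 1
  rw [← zpow_natCast (g ^ (s * a)) n, ← zpow_mul]
  have hgp : g ^ ((p - 1 : ℕ) : ℤ) = 1 := by
    rw [zpow_natCast, ← hord, pow_orderOf_eq_one]
  have ht' : t = s * a * (n : ℤ) + ((p - 1 : ℕ) : ℤ) * (Nat.gcdB n (p - 1) * s) := by
    rw [hs, hbez]
    ring
  rw [ht', zpow_add, zpow_mul g ((p - 1 : ℕ) : ℤ), hgp, one_zpow, mul_one]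

lemma pow_image_eq {n d m : ℕ} (hn : 1 ≤ n) (hd : d = Nat.gcd n (p - 1))
    (hdm : d * m = p - 1) (hm : 0 < m) :
    Finset.univ.image (fun x : ZMod p => x ^ n)
      = insert (0 : ZMod p) (Finset.univ.filter (fun x : ZMod p => x ^ m = 1)) := by
  apply Finset.Subset.antisymm
  · intro y hy
    rw [Finset.mem_image] at hy
    obtain ⟨x, -, rfl⟩ := hy
    by_cases hx : x = 0
    · subst hx
      rw [zero_pow (by omega : n ≠ 0)]
      exact Finset.mem_insert_self _ _
    · apply Finset.mem_insert_of_mem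
      rw [Finset.mem_filter]
      refine ⟨Finset.mem_univ _, ?_⟩
      have hdn : d ∣ n := hd ▸ Nat.gcd_dvd_left n (p - 1)
      obtain ⟨e, he⟩ := hdn
      have hkey : (x ^ n) ^ m = (x ^ (p - 1)) ^ e := by
        rw [← pow_mul, ← pow_mul]
        congr 1
        calc n * m = (d * e) * m := by rw [he]
          _ = (d * m) * e := by ring
          _ = (p - 1) * e := by rw [hdm]
      rw [hkey, ZMod.pow_card_sub_one_eq_one hx, one_pow]
  · intro y hy
    rw [Finset.mem_insert] at hy
    rcases hy with rfl | hy
    · rw [Finset.mem_image]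
      exact ⟨0, Finset.mem_univ _, zero_pow (by omega)⟩
    · rw [Finset.mem_filter] at hy
      obtain ⟨x, hx⟩ := exists_pow_eq hn hd hdm hm hy.2
      rw [Finset.mem_image]
      exact ⟨x, Finset.mem_univ _, hx⟩

lemma sum_pow_eq_zero {H : Finset (ZMod p)} {ζ : ZMod p} {j : ℕ}
    (hζ0 : ζ ≠ 0) (hζj : ζ ^ j ≠ 1)
    (hmul : ∀ x ∈ H, x * ζ ∈ H) :
    ∑ x ∈ H, x ^ j = 0 := by
  have himg : H.image (· * ζ) = H := by
    apply Finset.eq_of_subset_of_card_le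
    · intro y hy
      rw [Finset.mem_image] at hy
      obtain ⟨x, hx, rfl⟩ := hy
      exact hmul x hx
    · rw [Finset.card_image_of_injective _ (mul_left_injective₀ hζ0)]
  have hre : ∑ x ∈ H, x ^ j = ∑ x ∈ H, (x * ζ) ^ j := by
    conv_lhs => rw [← himg]
    rw [Finset.sum_image]
    intro x _ y _ h
    exact mul_left_injective₀ hζ0 h
  have hfac : ∑ x ∈ H, (x * ζ) ^ j = ζ ^ j * ∑ x ∈ H, x ^ j := by
    rw [Finset.mul_sum]
    apply Finset.sum_congr rfl
    intros
    ring
  have hS : ∑ x ∈ H, x ^ j = ζ ^ j * ∑ x ∈ H, x ^ j := hre.trans hfac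
  have hfin : (ζ ^ j - 1) * ∑ x ∈ H, x ^ j = 0 := by linear_combination -hS
  rcases mul_eq_zero.mp hfin with h | h
  · exact absurd (by linear_combination h) hζj
  · exact h

lemma H_dvd_card {H : Finset (ZMod p)} (hH0 : (0 : ZMod p) ∉ H) (h1H : (1 : ZMod p) ∈ H)
    (hHmul : ∀ a ∈ H, ∀ b ∈ H, a * b ∈ H) (hHinv : ∀ a ∈ H, a⁻¹ ∈ H) :
    ∀ N (T : Finset (ZMod p)), #T = N → (0 : ZMod p) ∉ T →
    (∀ h ∈ H, T.image (· * h) = T) → #H ∣ #T := by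
  intro N
  induction N using Nat.strong_induction_on with
  | _ N IH =>
  intro T hTN hT0 hTinv
  rcases Finset.eq_empty_or_nonempty T with rfl | ⟨t, ht⟩
  · simp
  · have htne0 : t ≠ 0 := fun h => hT0 (h ▸ ht)
    set O := H.image (t * ·) with hO
    have hOsub : O ⊆ T := by
      intro y hy
      rw [hO, Finset.mem_image] at hy
      obtain ⟨h, hh, rfl⟩ := hy
      rw [← hTinv h hh, Finset.mem_image]
      exact ⟨t, ht, rfl⟩
    have hOcard : #O = #H := Finset.card_image_of_injective _ (mul_right_injective₀ htne0)
    set T' := T \ O with hT'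
    have hT'0 : (0 : ZMod p) ∉ T' := fun h => hT0 (Finset.mem_sdiff.mp h).1
    have hT'inv : ∀ h ∈ H, T'.image (· * h) = T' := by
      intro h hh
      have hh0 : h ≠ 0 := fun h0 => hH0 (h0 ▸ hh)
      apply Finset.eq_of_subset_of_card_le
      · intro y hy
        rw [Finset.mem_image] at hy
        obtain ⟨x, hx, rfl⟩ := hy
        rw [hT', Finset.mem_sdiff] at hx ⊢
        constructor
        · rw [← hTinv h hh, Finset.mem_image]
          exact ⟨x, hx.1, rfl⟩
        · intro hmem
          apply hx.2
          rw [hO, Finset.mem_image] at hmem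
          obtain ⟨h', hh', heq⟩ := hmem
          rw [hO, Finset.mem_image]
          refine ⟨h' * h⁻¹, hHmul _ hh' _ (hHinv h hh), ?_⟩
          field_simp
          linear_combination heq
      · rw [Finset.card_image_of_injective _ (mul_left_injective₀ hh0)]
    have hO1 : #H ≤ #T := hOcard ▸ Finset.card_le_card hOsub
    have hT'card : #T' = #T - #H := by rw [hT', Finset.card_sdiff_of_subset hOsub, hOcard]
    have hHpos : 0 < #H := Finset.card_pos.mpr ⟨1, h1H⟩
    have hTpos : 0 < #T := Finset.card_pos.mpr ⟨t, ht⟩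
    have hdvd' := IH (#T') (by omega) T' rfl hT'0 hT'inv
    have : #T = #T' + #H := by omega
    rw [this]
    exact Nat.dvd_add hdvd' dvd_rfl


lemma sum_apSet {b r : ZMod p} {N : ℕ} (hr : r ≠ 0) (hN : N ≤ p) (f : ZMod p → ZMod p) :
    ∑ x ∈ apSet b r N, f x = ∑ i ∈ Finset.range N, f (b + (i : ZMod p) * r) := by
  rw [apSet, Finset.sum_image]
  intro i hi j hj hij
  simp only [Finset.mem_coe, Finset.mem_range] at hi hj
  exact cast_inj_lt (by omega) (by omega) (mul_right_cancel₀ hr (add_left_cancel hij))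

lemma six_mul_sum_sq (N : ℕ) :
    6 * ∑ i ∈ Finset.range N, i ^ 2 = N * (N - 1) * (2 * N - 1) := by
  induction N with
  | zero => simp
  | succ M IH =>
    rw [Finset.sum_range_succ, Nat.mul_add, IH]
    cases M with
    | zero => simp
    | succ K =>
      have e1 : (K + 1 + 1) - 1 = K + 1 := by omega
      have e2 : 2 * (K + 1 + 1) - 1 = 2 * K + 3 := by omega
      have e3 : (K + 1) - 1 = K := by omega
      have e4 : 2 * (K + 1) - 1 = 2 * K + 1 := by omega
      rw [e1, e2, e3, e4]
      ring

/-- The set `{0} ∪ μ_m` is not an arithmetic progression (for `3 ≤ m`, `m + 2 < p`). -/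
lemma As_not_ap {m : ℕ} (hm3 : 3 ≤ m) (hmp : m + 2 < p) {Hs : Finset (ZMod p)}
    (hHs : Hs = Finset.univ.filter (fun x : ZMod p => x ^ m = 1)) (hHcard : #Hs = m)
    {a r : ZMod p} (hr : r ≠ 0)
    (hap : insert (0 : ZMod p) Hs = apSet a r (m + 1)) : False := by
  have hp5 : 5 < p := by omega
  have h0H : (0 : ZMod p) ∉ Hs := by
    rw [hHs]
    simp only [Finset.mem_filter, Finset.mem_univ, true_and]
    rw [zero_pow (by omega)]
    exact zero_ne_one
  have hmemH : ∀ x, x ∈ Hs ↔ x ^ m = 1 := by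
    intro x; rw [hHs]; simp
  have hne0 : ∀ x ∈ Hs, x ≠ 0 := by
    intro x hx h0
    rw [h0] at hx
    exact h0H hx
  have hclosed : ∀ ζ ∈ Hs, ∀ x ∈ Hs, x * ζ ∈ Hs := by
    intro ζ hζ x hx
    rw [hmemH] at hζ hx ⊢
    rw [mul_pow, hζ, hx, one_mul]
  -- a nontrivial root of unity
  have hζ1 : ∃ ζ ∈ Hs, ζ ≠ 1 := by
    by_contra hno
    push_neg at hno
    have : Hs ⊆ {1} := fun x hx => Finset.mem_singleton.mpr (hno x hx)
    have := Finset.card_le_card this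
    simp at this
    omega
  have hζ2 : ∃ ζ ∈ Hs, ζ ^ 2 ≠ 1 := by
    by_contra hno
    push_neg at hno
    have hsub : Hs ⊆ (Polynomial.nthRoots 2 (1 : ZMod p)).toFinset := by
      intro x hx
      rw [Multiset.mem_toFinset, Polynomial.mem_nthRoots (by norm_num)]
      exact hno x hx
    have h2 := Finset.card_le_card hsub
    have h3 := (Polynomial.nthRoots 2 (1 : ZMod p)).toFinset_card_le
    have h4 := Polynomial.card_nthRoots 2 (1 : ZMod p)
    omega
  have hsum1 : ∑ x ∈ Hs, x = 0 := by
    obtain ⟨ζ, hζ, hζne⟩ := hζ1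
    have := sum_pow_eq_zero (j := 1) (hne0 ζ hζ) (by rwa [pow_one]) (hclosed ζ hζ)
    simpa using this
  have hsum2 : ∑ x ∈ Hs, x ^ 2 = 0 := by
    obtain ⟨ζ, hζ, hζne⟩ := hζ2
    exact sum_pow_eq_zero (hne0 ζ hζ) hζne (hclosed ζ hζ)
  have hA1 : ∑ x ∈ insert (0 : ZMod p) Hs, x = 0 := by
    rw [Finset.sum_insert h0H, hsum1, add_zero]
  have hA2 : ∑ x ∈ insert (0 : ZMod p) Hs, x ^ 2 = 0 := by
    rw [Finset.sum_insert h0H, hsum2]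
    simp
  set N := m + 1 with hN
  have hNp : N ≤ p := by omega
  set Nz : ZMod p := ((N : ℕ) : ZMod p) with hNz
  set T1 : ZMod p := ((∑ i ∈ Finset.range N, i : ℕ) : ZMod p) with hT1def
  set T2 : ZMod p := ((∑ i ∈ Finset.range N, i ^ 2 : ℕ) : ZMod p) with hT2def
  have hT1 : 2 * T1 = Nz * (Nz - 1) := by
    have hg := Finset.sum_range_id_mul_two N
    have : (((∑ i ∈ Finset.range N, i) * 2 : ℕ) : ZMod p) = ((N * (N - 1) : ℕ) : ZMod p) := by
      rw [hg]
    push_cast [Nat.cast_sub (by omega : 1 ≤ N)] at this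
    rw [hT1def, hNz]
    push_cast
    linear_combination this
  have hT2 : 6 * T2 = Nz * (Nz - 1) * (2 * Nz - 1) := by
    have hg := six_mul_sum_sq N
    have : ((6 * ∑ i ∈ Finset.range N, i ^ 2 : ℕ) : ZMod p)
        = ((N * (N - 1) * (2 * N - 1) : ℕ) : ZMod p) := by rw [hg]
    push_cast [Nat.cast_sub (by omega : 1 ≤ N), Nat.cast_sub (by omega : 1 ≤ 2 * N)] at this
    rw [hT2def, hNz]
    push_cast
    linear_combination this
  -- AP sums
  have hE1 : Nz * a + T1 * r = 0 := by
    rw [hap] at hA1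
    rw [sum_apSet hr hNp (fun x => x)] at hA1
    rw [Finset.sum_add_distrib, Finset.sum_const, Finset.card_range] at hA1
    rw [← Finset.sum_mul] at hA1
    have hcast : ∑ i ∈ Finset.range N, (i : ZMod p) = T1 := by
      rw [hT1def]
      push_cast
      rfl
    rw [hcast] at hA1
    rw [hNz]
    rw [nsmul_eq_mul] at hA1
    exact hA1
  have hE2 : Nz * a ^ 2 + 2 * a * r * T1 + r ^ 2 * T2 = 0 := by
    rw [hap] at hA2
    rw [sum_apSet hr hNp (fun x => x ^ 2)] at hA2
    have hexp : ∀ i ∈ Finset.range N, (a + (i : ZMod p) * r) ^ 2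
        = a ^ 2 + 2 * a * r * (i : ZMod p) + r ^ 2 * ((i : ZMod p)) ^ 2 := by
      intro i _
      ring
    rw [Finset.sum_congr rfl hexp] at hA2
    rw [Finset.sum_add_distrib, Finset.sum_add_distrib, Finset.sum_const,
      Finset.card_range, ← Finset.mul_sum, ← Finset.mul_sum] at hA2
    have hc1 : ∑ i ∈ Finset.range N, (i : ZMod p) = T1 := by
      rw [hT1def]; push_cast; rfl
    have hc2 : ∑ i ∈ Finset.range N, ((i : ZMod p)) ^ 2 = T2 := by
      rw [hT2def]; push_cast; rfl
    rw [hc1, hc2, nsmul_eq_mul] at hA2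
    rw [hNz]
    exact hA2
  -- nonvanishing facts
  have hcast_ne : ∀ x : ℕ, 0 < x → x < p → ((x : ℕ) : ZMod p) ≠ 0 := by
    intro x hx hxp h0
    have := (ZMod.natCast_eq_zero_iff x p).mp h0
    have := Nat.le_of_dvd hx this
    omega
  have hNzne : Nz ≠ 0 := hcast_ne N (by omega) (by omega)
  have hNz1ne : Nz - 1 ≠ 0 := by
    have : Nz - 1 = ((m : ℕ) : ZMod p) := by
      rw [hNz, hN]
      push_cast
      ring
    rw [this]
    exact hcast_ne m (by omega) (by omega)
  have hNz2ne : Nz + 1 ≠ 0 := by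
    have : Nz + 1 = (((m + 2 : ℕ)) : ZMod p) := by
      rw [hNz, hN]
      push_cast
      ring
    rw [this]
    exact hcast_ne (m + 2) (by omega) (by omega)
  have h2ne : (2 : ZMod p) ≠ 0 := by
    have : (2 : ZMod p) = ((2 : ℕ) : ZMod p) := by norm_num
    rw [this]
    exact hcast_ne 2 (by omega) (by omega)
  -- derive 2a = -(Nz - 1) r
  have hNfac : Nz * (2 * a + (Nz - 1) * r) = 0 := by
    linear_combination 2 * hE1 - r * hT1
  have h2a : 2 * a + (Nz - 1) * r = 0 := by
    rcases mul_eq_zero.mp hNfac with h | h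
    · exact absurd h hNzne
    · exact h
  have hQ : 2 * Nz * (Nz - 1) * (Nz + 1) * r ^ 2 = 0 := by
    linear_combination 24 * hE2 - 24 * a * r * hT1 - 4 * r ^ 2 * hT2
      - (12 * Nz * a + 6 * Nz * (Nz - 1) * r) * h2a
  have hnz : 2 * Nz * (Nz - 1) * (Nz + 1) * r ^ 2 ≠ 0 := by
    apply mul_ne_zero
    apply mul_ne_zero
    apply mul_ne_zero
    apply mul_ne_zero h2ne hNzne
    · exact hNz1ne
    · exact hNz2ne
    · exact pow_ne_zero 2 hr
  exact hnz hQ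

/-- Iterated sumset. -/
def iterSum (A : Finset (ZMod p)) : ℕ → Finset (ZMod p)
  | 0 => {0}
  | j + 1 => iterSum A j + A

lemma zero_add_fin (A : Finset (ZMod p)) : ({0} : Finset (ZMod p)) + A = A := by
  ext x
  simp only [Finset.mem_add, Finset.mem_singleton]
  constructor
  · rintro ⟨y, rfl, b, hb, rfl⟩
    simpa using hb
  · intro hx
    exact ⟨0, rfl, x, hx, by ring⟩

lemma iterSum_zero_mem {A : Finset (ZMod p)} (h0 : (0 : ZMod p) ∈ A) :
    ∀ j, (0 : ZMod p) ∈ iterSum A j := by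
  intro j
  induction j with
  | zero => simp [iterSum]
  | succ j IH =>
    have := Finset.add_mem_add IH h0
    simpa [iterSum] using this

lemma iterSum_subset_succ {A : Finset (ZMod p)} (h0 : (0 : ZMod p) ∈ A) (j : ℕ) :
    iterSum A j ⊆ iterSum A (j + 1) := by
  intro x hx
  have := Finset.add_mem_add hx h0
  simpa [iterSum] using this

lemma image_mul_sum (S A : Finset (ZMod p)) (h : ZMod p) :
    (S + A).image (· * h) = S.image (· * h) + A.image (· * h) := by
  ext z
  simp only [Finset.mem_image, Finset.mem_add]
  constructor
  · rintro ⟨x, ⟨u, hu, v, hv, rfl⟩, rfl⟩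
    exact ⟨u * h, ⟨u, hu, rfl⟩, v * h, ⟨v, hv, rfl⟩, by ring⟩
  · rintro ⟨x, ⟨u, hu, rfl⟩, y, ⟨v, hv, rfl⟩, rfl⟩
    exact ⟨u + v, ⟨u, hu, v, hv, rfl⟩, by ring⟩

lemma iterSum_inv {A : Finset (ZMod p)} {h : ZMod p}
    (hinv : A.image (· * h) = A) : ∀ j, (iterSum A j).image (· * h) = iterSum A j := by
  intro j
  induction j with
  | zero => simp [iterSum]
  | succ j IH =>
    show ((iterSum A j + A).image (· * h)) = iterSum A j + A
    rw [image_mul_sum, IH, hinv]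

lemma erase_zero_inv {S : Finset (ZMod p)} {h : ZMod p} (hne : h ≠ 0)
    (hinv : S.image (· * h) = S) : (S.erase 0).image (· * h) = S.erase 0 := by
  ext y
  simp only [Finset.mem_image, Finset.mem_erase]
  constructor
  · rintro ⟨x, ⟨hx0, hxS⟩, rfl⟩
    refine ⟨mul_ne_zero hx0 hne, ?_⟩
    rw [← hinv, Finset.mem_image]
    exact ⟨x, hxS, rfl⟩
  · rintro ⟨hy0, hyS⟩
    rw [← hinv, Finset.mem_image] at hyS
    obtain ⟨x, hx, rfl⟩ := hyS
    refine ⟨x, ⟨?_, hx⟩, rfl⟩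
    intro h0
    rw [h0, zero_mul] at hy0
    exact hy0 rfl

lemma iterSum_mem_rep {n : ℕ} {A : Finset (ZMod p)}
    (hA : A = Finset.univ.image (fun x : ZMod p => x ^ n)) :
    ∀ j, ∀ c ∈ iterSum A j, ∃ x : Fin j → ZMod p, ∑ i, x i ^ n = c := by
  intro j
  induction j with
  | zero =>
    intro c hc
    simp only [iterSum, Finset.mem_singleton] at hc
    exact ⟨fun i => i.elim0, by simp [hc]⟩
  | succ j IH =>
    intro c hc
    rw [show iterSum A (j + 1) = iterSum A j + A from rfl, Finset.mem_add] at hc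
    obtain ⟨s, hs, b, hb, rfl⟩ := hc
    obtain ⟨x, hx⟩ := IH s hs
    rw [hA, Finset.mem_image] at hb
    obtain ⟨y, -, rfl⟩ := hb
    refine ⟨Fin.cons y x, ?_⟩
    rw [Fin.sum_univ_succ]
    simp only [Fin.cons_zero, Fin.cons_succ]
    rw [hx]
    ring

end CMS

open CMS in
/-- Odd prime `p`, `n ≥ 1`, `d = gcd(n, p-1) > 1`, `p > 2d + 1`: with
`h = ⌈(d+1)/2⌉`, every element of `ℤ/pℤ` is a sum of `h` `n`-th powers. -/
theorem stmt_9 (p n d h : ℕ) (hp : p.Prime) (hp2 : p ≠ 2) (hn : 1 ≤ n)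
    (hd : d = Nat.gcd n (p - 1)) (hd1 : 1 < d) (hpd : 2 * d + 1 < p)
    (hh : h = (d + 2) / 2) :
    ∀ c : ZMod p, ∃ x : Fin h → ZMod p, ∑ i, x i ^ n = c := by
  haveI : Fact p.Prime := ⟨hp⟩
  intro c
  have hdn : d ∣ n := hd ▸ Nat.gcd_dvd_left _ _
  have hdp : d ∣ p - 1 := hd ▸ Nat.gcd_dvd_right _ _
  set m := (p - 1) / d with hmdef
  have hdm : d * m = p - 1 := Nat.mul_div_cancel' hdp
  have hm3 : 3 ≤ m := by
    by_contra hlt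
    push_neg at hlt
    have h1 : d * m ≤ d * 2 := Nat.mul_le_mul_left _ (by omega)
    omega
  have h2m : 2 * m ≤ d * m := Nat.mul_le_mul_right _ (by omega)
  have hmp : m + 2 < p := by omega
  have hm0 : 0 < m := by omega
  set Hs := Finset.univ.filter (fun x : ZMod p => x ^ m = 1) with hHs
  set As := insert (0 : ZMod p) Hs with hAs
  have himg : Finset.univ.image (fun x : ZMod p => x ^ n) = As :=
    pow_image_eq hn hd hdm hm0
  have hHcard : #Hs = m := card_roots_eq hm0 ⟨d, by rw [← hdm, Nat.mul_comm]⟩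
  have hmemH : ∀ x : ZMod p, x ∈ Hs ↔ x ^ m = 1 := by
    intro x; rw [hHs]; simp
  have h0H : (0 : ZMod p) ∉ Hs := by
    rw [hmemH, zero_pow (by omega)]
    exact zero_ne_one
  have hAcard : #As = m + 1 := by
    rw [hAs, Finset.card_insert_of_notMem h0H, hHcard]
  have h0A : (0 : ZMod p) ∈ As := by rw [hAs]; exact Finset.mem_insert_self _ _
  have hclosed : ∀ a ∈ Hs, ∀ b ∈ Hs, a * b ∈ Hs := by
    intro a ha b hb
    rw [hmemH] at ha hb ⊢
    rw [mul_pow, ha, hb, one_mul]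
  have hHne0 : ∀ x ∈ Hs, x ≠ 0 := by
    intro x hx h0
    rw [h0] at hx
    exact h0H hx
  have h1H : (1 : ZMod p) ∈ Hs := by rw [hmemH]; simp
  have hHinv : ∀ a ∈ Hs, a⁻¹ ∈ Hs := by
    intro a ha
    rw [hmemH] at ha ⊢
    rw [inv_pow, ha, inv_one]
  have hAinv : ∀ h' ∈ Hs, As.image (· * h') = As := by
    intro h' hh'
    have hHim : Hs.image (· * h') = Hs := by
      apply Finset.eq_of_subset_of_card_le
      · intro y hy
        rw [Finset.mem_image] at hy
        obtain ⟨x, hx, rfl⟩ := hy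
        exact hclosed x hx h' hh'
      · rw [Finset.card_image_of_injective _ (mul_left_injective₀ (hHne0 h' hh'))]
    rw [hAs, Finset.image_insert, zero_mul, hHim]
  have hdvd1 : ∀ j, m ∣ #(iterSum As j) - 1 := by
    intro j
    have h0S : (0 : ZMod p) ∈ iterSum As j := iterSum_zero_mem h0A j
    have hcer : #((iterSum As j).erase 0) = #(iterSum As j) - 1 :=
      Finset.card_erase_of_mem h0S
    rw [← hcer, ← hHcard]
    apply H_dvd_card h0H h1H hclosed hHinv _ _ rfl
    · exact Finset.notMem_erase _ _
    · intro h' hh'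
      exact erase_zero_inv (hHne0 h' hh') (iterSum_inv (hAinv h' hh') j)
  have hgrow : ∀ j : ℕ, min p ((2 * j + 1) * m + 1) ≤ #(iterSum As (j + 1)) := by
    intro j
    induction j with
    | zero =>
      have h1 : iterSum As 1 = As := by
        show iterSum As 0 + As = As
        rw [show iterSum As 0 = {0} from rfl, zero_add_fin]
      rw [h1, hAcard]
      have := min_le_right p ((2 * 0 + 1) * m + 1)
      omega
    | succ j IH =>
      set S := iterSum As (j + 1) with hSdef
      have hnext : iterSum As (j + 1 + 1) = S + As := rfl
      have hsub : S ⊆ S + As := by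
        intro x hx
        have := Finset.add_mem_add hx h0A
        simpa using this
      rcases le_or_gt p (#S) with hge | hlt
      · rw [hnext]
        calc min p ((2 * (j + 1) + 1) * m + 1) ≤ p := min_le_left _ _
          _ ≤ #S := hge
          _ ≤ #(S + As) := Finset.card_le_card hsub
      · have hmin : (2 * j + 1) * m + 1 ≤ #S := by
          rcases le_total p ((2 * j + 1) * m + 1) with hc | hc
          · rw [min_eq_left hc] at IH
            omega
          · rwa [min_eq_right hc] at IH
        rcases le_or_gt p (#(S + As)) with hge2 | hlt2
        · rw [hnext]
          exact le_trans (min_le_left _ _) hge2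
        · have hSne : S.Nonempty := ⟨0, iterSum_zero_mem h0A _⟩
          have hAne : As.Nonempty := ⟨0, h0A⟩
          have hCD := cd hSne hAne hlt2
          rcases le_or_gt (#S + 2 * m) (#(S + As)) with hbig | hsmall
          · rw [hnext]
            refine le_trans (min_le_right _ _) ?_
            have e : (2 * (j + 1) + 1) * m = (2 * j + 1) * m + 2 * m := by ring
            omega
          · exfalso
            obtain ⟨u, hu⟩ := hdvd1 (j + 1)
            obtain ⟨v, hv⟩ := hdvd1 (j + 1 + 1)
            rw [hnext] at hv
            rw [← hSdef] at hu
            have hS1 : 1 ≤ #S := Finset.card_pos.mpr hSne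
            have hSA1 : 1 ≤ #(S + As) := by
              have := Finset.card_le_card hsub
              omega
            have em1 : m * (u + 1) = m * u + m := by ring
            have em2 : m * (u + 1) ≤ m * v := by omega
            have huv1 : u + 1 ≤ v := Nat.le_of_mul_le_mul_left em2 (by omega)
            have em3 : m * (u + 2) = m * u + 2 * m := by ring
            have huv2 : v < u + 2 := by
              by_contra hge3
              push_neg at hge3
              have : m * (u + 2) ≤ m * v := Nat.mul_le_mul_left m hge3
              omega
            have hveq : v = u + 1 := by omega
            subst hveq
            have hcrit : #(S + As) = #S + #As - 1 := by
              rw [hAcard]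
              omega
            have hmd : m * d = p - 1 := by rw [mul_comm]; exact hdm
            have hvd : u + 1 < d := by
              by_contra hge3
              push_neg at hge3
              have : m * d ≤ m * (u + 1) := Nat.mul_le_mul_left m hge3
              omega
            have hple : #(S + As) ≤ p - 2 := by
              have e4 : m * (u + 1 + 1) = m * (u + 1) + m := by ring
              have h5 : m * (u + 1 + 1) ≤ m * d := Nat.mul_le_mul_left m (by omega)
              omega
            have hS2 : 2 ≤ #S := by
              have hmm : m ≤ (2 * j + 1) * m := Nat.le_mul_of_pos_left m (by omega)
              omega
            obtain ⟨q, r, hr, hap⟩ := vosper_sum (#As) S As rfl hS2 (by omega) hcrit hple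
            obtain ⟨a₀, hAap⟩ := ap_of_crit_sum hr hSne (by omega) hcrit hple hap
            rw [hAcard] at hAap
            rw [hAs] at hAap
            exact As_not_ap hm3 hmp hHs hHcard hr hAap
  have hh1 : 1 ≤ h := by omega
  have hfull : #(iterSum As h) = p := by
    have hg := hgrow (h - 1)
    rw [show h - 1 + 1 = h by omega] at hg
    have hbig : p ≤ (2 * (h - 1) + 1) * m + 1 := by
      have e1 : d * m ≤ (2 * (h - 1) + 1) * m := Nat.mul_le_mul_right m (by omega)
      omega
    rw [min_eq_left hbig] at hg
    have hple2 : #(iterSum As h) ≤ p := by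
      have := Finset.card_le_card (Finset.subset_univ (iterSum As h))
      rwa [Finset.card_univ, ZMod.card] at this
    omega
  have huniv : iterSum As h = Finset.univ := by
    apply Finset.eq_univ_of_card
    rw [hfull, ZMod.card]
  exact iterSum_mem_rep himg.symm h c (huniv ▸ Finset.mem_univ c)
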